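/- Let G be a connected graph, not a 4-cycle, f ∈ 𝒮 (an automorphism of G respecting the chosen labelings x_i of the 2-cuts S_i = {x_i,y_i}, i.e., f(x_i) = x_{f(i)} for all i), and β ⊆ 𝒯_G. Then ι(f) ∘ ψ_β = ψ_{fβ} ∘ ι(f), where fβ is the image of β under the induced action of f on 𝒯_G. -/

import Mathlib

open scoped Classical symmDiff

variable {V : Type*}

/-- The `k`-token graph of `G`: vertices are the `k`-subsets of `V(G)`,
two being adjacent iff their symmetric difference is an edge of `G`. -/
def tokenGraph [DecidableEq V] (G : SimpleGraph V) (k : ℕ) :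
    SimpleGraph {A : Finset V // A.card = k} where
  Adj A B := ∃ a b : V, G.Adj a b ∧ (A.1 ∆ B.1) = {a, b}
  symm := by
    constructor
    rintro A B ⟨a, b, hab, h⟩
    exact ⟨a, b, hab, by rwa [symmDiff_comm]⟩
  loopless := by
    constructor
    rintro A ⟨a, b, hab, h⟩
    rw [symmDiff_self] at h
    exact (Finset.insert_ne_empty a {b}) h.symm

/-- `S` is a 2-cut with the same neighbours: a 2-element vertex set whose removal
disconnects `G` and whose two vertices have the same neighbours outside `S`. -/
def SameNbrCut (G : SimpleGraph V) (S : Finset V) : Prop :=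
  S.card = 2 ∧ ¬ (G.induce ((↑S : Set V)ᶜ)).Preconnected ∧
    ∀ x ∈ S, ∀ y ∈ S, ∀ v ∉ S, (G.Adj x v ↔ G.Adj y v)

/-- `A^S = (A \ S) ∪ (S \ A)`. -/
def tokenMove [DecidableEq V] (A S : Finset V) : Finset V := (A \ S) ∪ (S \ A)

/-- The connected components of `G \ S`. -/
abbrev delComp (G : SimpleGraph V) (S : Finset V) :=
  (G.induce ((↑S : Set V)ᶜ)).ConnectedComponent

/-- The distribution tuple of `A` over the components of `G \ S`. -/
noncomputable def compDist (G : SimpleGraph V) (S : Finset V) (A : Finset V)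
    (c : delComp G S) : ℕ :=
  {v : ((↑S : Set V)ᶜ : Set V) | (v : V) ∈ A ∧
    (G.induce ((↑S : Set V)ᶜ)).connectedComponentMk v = c}.ncard

/-- `T_S`: distribution tuples with `kᵢ ≤ nᵢ` summing to `k - 1`. -/
def TS (G : SimpleGraph V) (S : Finset V) (k : ℕ) : Set (delComp G S → ℕ) :=
  {t | (∀ c, t c ≤ c.supp.ncard) ∧ ∑ᶠ c, t c = k - 1}

/-- The map `φ_{S,α}` on `k`-subsets. -/
noncomputable def phiFun [DecidableEq V] (G : SimpleGraph V) (S : Finset V)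
    (α : Set (delComp G S → ℕ)) (A : Finset V) : Finset V :=
  if compDist G S A ∈ α then tokenMove A S else A

/-- The map `ψ_β`, the composition of the `φ_{Sᵢ,βᵢ}`. -/
noncomputable def psiFun [DecidableEq V] (G : SimpleGraph V) {q : ℕ}
    (S : Fin q → Finset V) (β : ∀ i, Set (delComp G (S i) → ℕ)) :
    Finset V → Finset V :=
  (List.ofFn (fun i => phiFun G (S i) (β i))).foldr (· ∘ ·) id
section AuxLemmas

open SimpleGraph

variable {V : Type*}

lemma walkRecAux {G : SimpleGraph V} {P : V → Prop}
    (hstep : ∀ u v, G.Adj u v → P v → P u) :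
    ∀ {w t : V}, G.Walk w t → P t → P w := by
  intro w t p
  induction p with
  | nil => exact id
  | cons h _ ih => exact fun pt => hstep _ _ h (ih pt)

lemma eq_of_reachable_isolated {G : SimpleGraph V} {a b : V} (h : G.Reachable a b)
    (hiso : ∀ u, ¬ G.Adj a u) : a = b := by
  obtain ⟨p⟩ := h
  cases p with
  | nil => rfl
  | cons h' _ => exact absurd h' (hiso _)

lemma mem_complS {S : Finset V} {v : V} : v ∈ ((↑S : Set V)ᶜ : Set V) ↔ v ∉ S := Iff.rfl

lemma sameNbrCut_pair {G : SimpleGraph V} {S : Finset V} (hS : SameNbrCut G S) {y : V}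
    (hy : y ∈ S) : ∃ x, x ≠ y ∧ S = {x, y} := by
  obtain ⟨a, b, hab, hSab⟩ := Finset.card_eq_two.mp hS.1
  subst hSab
  rcases Finset.mem_insert.mp hy with rfl | hy'
  · exact ⟨b, hab.symm, Finset.pair_comm _ _⟩
  · rw [Finset.mem_singleton.mp hy']
    exact ⟨a, hab, rfl⟩

lemma sameNbrCut_disjoint {G : SimpleGraph V} (hG : G.Connected)
    {S S' : Finset V} (hS : SameNbrCut G S) (hS' : SameNbrCut G S') (hne : S ≠ S') :
    Disjoint S S' := by
  classical
  rw [Finset.disjoint_right]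
  by_contra hcon
  push_neg at hcon
  obtain ⟨y, hyS', hyS⟩ := hcon
  obtain ⟨x, hxy, hSxy⟩ := sameNbrCut_pair hS hyS
  obtain ⟨x', hx'y, hS'xy⟩ := sameNbrCut_pair hS' hyS'
  have hx'x : x' ≠ x := by
    rintro rfl
    exact hne (hSxy.trans hS'xy.symm)
  have hx'S : x' ∉ S := by
    rw [hSxy]
    simp [hx'x, hx'y]
  have hx'c : x' ∈ ((↑S : Set V)ᶜ : Set V) := mem_complS.mpr hx'S
  set H := G.induce ((↑S : Set V)ᶜ) with hH
  have key : ∀ w (hw : w ∈ ((↑S : Set V)ᶜ : Set V)),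
      H.Reachable ⟨w, hw⟩ ⟨x', hx'c⟩ := by
    have hbase : ∀ hw : x ∈ ((↑S : Set V)ᶜ : Set V), H.Reachable ⟨x, hw⟩ ⟨x', hx'c⟩ := by
      intro hw
      exact absurd (by rw [hSxy]; simp) (mem_complS.mp hw)
    have hstep : ∀ u v, G.Adj u v →
        (∀ hv : v ∈ ((↑S : Set V)ᶜ : Set V), H.Reachable ⟨v, hv⟩ ⟨x', hx'c⟩) →
        (∀ hu : u ∈ ((↑S : Set V)ᶜ : Set V), H.Reachable ⟨u, hu⟩ ⟨x', hx'c⟩) := by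
      intro u v huv hv hu
      have huS : u ∉ S := mem_complS.mp hu
      by_cases hvS : v ∈ S
      · -- u is adjacent to a vertex of S, hence to y, hence to x'
        have hyu : G.Adj y u := (hS.2.2 v hvS y hyS u huS).mp huv.symm
        by_cases hux' : u = x'
        · subst hux'
          exact Reachable.refl _
        · have huS' : u ∉ S' := by
            rw [hS'xy]
            simp only [Finset.mem_insert, Finset.mem_singleton]
            rintro (rfl | rfl)
            · exact hux' rfl
            · exact huS hyS
          have hx'u : G.Adj x' u :=
            (hS'.2.2 x' (by rw [hS'xy]; simp) y (by rw [hS'xy]; simp) u huS').mpr hyu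
          have : H.Adj ⟨u, hu⟩ ⟨x', hx'c⟩ := hx'u.symm
          exact this.reachable
      · have hvc : v ∈ ((↑S : Set V)ᶜ : Set V) := mem_complS.mpr hvS
        have hadj : H.Adj ⟨u, hu⟩ ⟨v, hvc⟩ := huv
        exact hadj.reachable.trans (hv hvc)
    intro w hw
    obtain ⟨p⟩ := hG.preconnected w x
    exact walkRecAux hstep p hbase hw
  exact hS.2.1 (fun u v => ((key u.1 u.2).trans (key v.1 v.2).symm))

end AuxLemmas

section FactA

open SimpleGraph

variable {V : Type*}

lemma sameNbrCut_pair_same_comp [DecidableEq V] {G : SimpleGraph V} (hG : G.Connected)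
    (h4 : IsEmpty (G ≃g SimpleGraph.cycleGraph 4))
    {S T : Finset V} (hS : SameNbrCut G S) (hT : SameNbrCut G T) (hne : S ≠ T)
    {x y : V} (hxy : x ≠ y) (hSxy : S = {x, y})
    (hxT : x ∈ ((↑T : Set V)ᶜ : Set V)) (hyT : y ∈ ((↑T : Set V)ᶜ : Set V)) :
    (G.induce ((↑T : Set V)ᶜ)).connectedComponentMk ⟨x, hxT⟩ =
      (G.induce ((↑T : Set V)ᶜ)).connectedComponentMk ⟨y, hyT⟩ := by
  classical
  by_contra hcc
  rw [ConnectedComponent.eq] at hcc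
  set HT := G.induce ((↑T : Set V)ᶜ) with hHT
  set HS := G.induce ((↑S : Set V)ᶜ) with hHS
  have hxS : x ∈ S := by rw [hSxy]; simp
  have hyS : y ∈ S := by rw [hSxy]; simp
  obtain ⟨a, b, hab, hTab⟩ := Finset.card_eq_two.mp hT.1
  -- rename
  set x' := a with hx'def
  set y' := b with hy'def
  have hx'T : x' ∈ T := by rw [hTab]; simp
  have hy'T : y' ∈ T := by rw [hTab]; simp
  have hdisj : Disjoint S T := sameNbrCut_disjoint hG hS hT hne
  have hx'S : x' ∉ S := Finset.disjoint_right.mp hdisj hx'T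
  have hy'S : y' ∉ S := Finset.disjoint_right.mp hdisj hy'T
  have hxTn : x ∉ T := mem_complS.mp hxT
  have hyTn : y ∉ T := mem_complS.mp hyT
  have hx'Sc : x' ∈ ((↑S : Set V)ᶜ : Set V) := mem_complS.mpr hx'S
  have hy'Sc : y' ∈ ((↑S : Set V)ᶜ : Set V) := mem_complS.mpr hy'S
  -- same-neighbour conditions
  have hsnS : ∀ v ∉ S, (G.Adj x v ↔ G.Adj y v) := fun v hv => hS.2.2 x hxS y hyS v hv
  have hsnT : ∀ v ∉ T, (G.Adj x' v ↔ G.Adj y' v) := fun v hv => hT.2.2 x' hx'T y' hy'T v hv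
  -- (a) x, y are not adjacent
  have hnadjxy : ¬ G.Adj x y := by
    intro h
    exact hcc (Adj.reachable (show HT.Adj ⟨x, hxT⟩ ⟨y, hyT⟩ from h))
  -- (b) x (and y) have no neighbours outside S ∪ T
  have houtx : ∀ v, v ∉ S → v ∉ T → ¬ G.Adj x v := by
    intro v hvS hvT hadj
    have h1 : HT.Adj ⟨x, hxT⟩ ⟨v, mem_complS.mpr hvT⟩ := hadj
    have h2 : HT.Adj ⟨v, mem_complS.mpr hvT⟩ ⟨y, hyT⟩ := ((hsnS v hvS).mp hadj).symm
    exact hcc (h1.reachable.trans h2.reachable)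
  have houty : ∀ v, v ∉ S → v ∉ T → ¬ G.Adj y v := by
    intro v hvS hvT hadj
    exact houtx v hvS hvT ((hsnS v hvS).mpr hadj)
  -- (c/d) x and y are adjacent to both x' and y'
  have hnbr : ∀ z, z ∈ S → (∀ v, v ∉ S → v ∉ T → ¬ G.Adj z v) → (¬ G.Adj z x ∨ z = x) →
      G.Adj x' z ∧ G.Adj y' z := by
    intro z hzS hout hznx
    have hzTn : z ∉ T := Finset.disjoint_left.mp hdisj hzS
    -- find a neighbour of z
    have hzne : z ≠ x ∨ z ≠ y := by
      rcases eq_or_ne z x with rfl | h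
      · exact Or.inr hxy
      · exact Or.inl h
    obtain ⟨w, hw⟩ : ∃ w, G.Adj z w := by
      have hVne : ∃ u : V, u ≠ z := by
        rcases eq_or_ne z x with rfl | h
        · exact ⟨y, hxy.symm⟩
        · exact ⟨x, fun hh => h hh.symm⟩
      obtain ⟨u, hu⟩ := hVne
      obtain ⟨p⟩ := hG.preconnected z u
      cases p with
      | nil => exact absurd rfl hu.symm
      | cons h' _ => exact ⟨_, h'⟩
    -- w is in T
    have hwS : w ∉ S := by
      intro hwS
      rw [hSxy] at hwS hzS
      simp only [Finset.mem_insert, Finset.mem_singleton] at hwS hzS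
      rcases hzS with rfl | rfl <;> rcases hwS with rfl | rfl
      · exact hw.ne rfl
      · exact hnadjxy hw
      · rcases hznx with h | h
        · exact h hw
        · exact hxy h.symm
      · exact hw.ne rfl
    have hwT : w ∈ T := by
      by_contra hwT
      exact hout w hwS hwT hw
    rw [hTab] at hwT
    simp only [Finset.mem_insert, Finset.mem_singleton] at hwT
    rcases hwT with rfl | rfl
    · exact ⟨hw.symm, (hsnT z hzTn).mp hw.symm⟩
    · exact ⟨(hsnT z hzTn).mpr hw.symm, hw.symm⟩
  have hxnbr : G.Adj x' x ∧ G.Adj y' x := hnbr x hxS houtx (Or.inr rfl)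
  have hynbr : G.Adj x' y ∧ G.Adj y' y := hnbr y hyS houty (Or.inl fun h => hnadjxy h.symm)
  -- claim: every vertex outside S reaches x' or y' in G \ S
  have hreach : ∀ w (hw : w ∈ ((↑S : Set V)ᶜ : Set V)),
      HS.Reachable ⟨w, hw⟩ ⟨x', hx'Sc⟩ ∨ HS.Reachable ⟨w, hw⟩ ⟨y', hy'Sc⟩ := by
    have hbase : ∀ hw : x ∈ ((↑S : Set V)ᶜ : Set V),
        HS.Reachable ⟨x, hw⟩ ⟨x', hx'Sc⟩ ∨ HS.Reachable ⟨x, hw⟩ ⟨y', hy'Sc⟩ := by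
      intro hw
      exact absurd hxS (mem_complS.mp hw)
    have hstep : ∀ u v, G.Adj u v →
        (∀ hv : v ∈ ((↑S : Set V)ᶜ : Set V),
          HS.Reachable ⟨v, hv⟩ ⟨x', hx'Sc⟩ ∨ HS.Reachable ⟨v, hv⟩ ⟨y', hy'Sc⟩) →
        (∀ hu : u ∈ ((↑S : Set V)ᶜ : Set V),
          HS.Reachable ⟨u, hu⟩ ⟨x', hx'Sc⟩ ∨ HS.Reachable ⟨u, hu⟩ ⟨y', hy'Sc⟩) := by
      intro u v huv hv hu
      have huS : u ∉ S := mem_complS.mp hu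
      by_cases hvS : v ∈ S
      · -- u is adjacent to x (via same neighbours), hence u ∈ T
        have hxu : G.Adj x u := by
          rw [hSxy] at hvS
          simp only [Finset.mem_insert, Finset.mem_singleton] at hvS
          rcases hvS with rfl | rfl
          · exact huv.symm
          · exact (hsnS u huS).mpr huv.symm
        have huT : u ∈ T := by
          by_contra huT
          exact houtx u huS huT hxu
        rw [hTab] at huT
        simp only [Finset.mem_insert, Finset.mem_singleton] at huT
        rcases huT with rfl | rfl
        · exact Or.inl (Reachable.refl _)
        · exact Or.inr (Reachable.refl _)
      · have hvc : v ∈ ((↑S : Set V)ᶜ : Set V) := mem_complS.mpr hvS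
        have hadj : HS.Adj ⟨u, hu⟩ ⟨v, hvc⟩ := huv
        rcases hv hvc with h | h
        · exact Or.inl (hadj.reachable.trans h)
        · exact Or.inr (hadj.reachable.trans h)
    intro w hw
    obtain ⟨p⟩ := hG.preconnected w x
    exact walkRecAux hstep p hbase hw
  -- x' and y' are not reachable in G \ S
  have hnr' : ¬ HS.Reachable ⟨x', hx'Sc⟩ ⟨y', hy'Sc⟩ := by
    intro hr
    apply hS.2.1
    intro u v
    have hu := (hreach u.1 u.2).elim id (fun h => h.trans hr.symm)
    have hv := (hreach v.1 v.2).elim id (fun h => h.trans hr.symm)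
    exact hu.trans hv.symm
  have hnadj' : ¬ G.Adj x' y' := by
    intro h
    exact hnr' (Adj.reachable (show HS.Adj ⟨x', hx'Sc⟩ ⟨y', hy'Sc⟩ from h))
  have houtx' : ∀ v, v ∉ S → v ∉ T → ¬ G.Adj x' v := by
    intro v hvS hvT hadj
    have h1 : HS.Adj ⟨x', hx'Sc⟩ ⟨v, mem_complS.mpr hvS⟩ := hadj
    have h2 : HS.Adj ⟨v, mem_complS.mpr hvS⟩ ⟨y', hy'Sc⟩ := ((hsnT v hvT).mp hadj).symm
    exact hnr' (h1.reachable.trans h2.reachable)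
  have houty' : ∀ v, v ∉ S → v ∉ T → ¬ G.Adj y' v := by
    intro v hvS hvT hadj
    exact houtx' v hvS hvT ((hsnT v hvT).mpr hadj)
  -- every vertex is one of x, y, x', y'
  have huniv : ∀ v : V, v = x ∨ v = y ∨ v = x' ∨ v = y' := by
    intro v
    by_contra hv
    push_neg at hv
    obtain ⟨h1, h2, h3, h4'⟩ := hv
    have hvS : v ∉ S := by rw [hSxy]; simp [h1, h2]
    have hvT : v ∉ T := by rw [hTab]; simp [h3, h4']
    have hisox' : ∀ u, ¬ HS.Adj ⟨x', hx'Sc⟩ u := by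
      rintro ⟨u, hu⟩ hadj
      have huS : u ∉ S := mem_complS.mp hu
      have hGadj : G.Adj x' u := hadj
      by_cases huT : u ∈ T
      · rw [hTab] at huT
        simp only [Finset.mem_insert, Finset.mem_singleton] at huT
        rcases huT with rfl | rfl
        · exact hGadj.ne rfl
        · exact hnadj' hGadj
      · exact houtx' u huS huT hGadj
    have hisoy' : ∀ u, ¬ HS.Adj ⟨y', hy'Sc⟩ u := by
      rintro ⟨u, hu⟩ hadj
      have huS : u ∉ S := mem_complS.mp hu
      have hGadj : G.Adj y' u := hadj
      by_cases huT : u ∈ T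
      · rw [hTab] at huT
        simp only [Finset.mem_insert, Finset.mem_singleton] at huT
        rcases huT with rfl | rfl
        · exact hnadj' hGadj.symm
        · exact hGadj.ne rfl
      · exact houty' u huS huT hGadj
    rcases hreach v (mem_complS.mpr hvS) with h | h
    · have := eq_of_reachable_isolated h.symm hisox'
      exact h3 (congrArg Subtype.val this).symm
    · have := eq_of_reachable_isolated h.symm hisoy'
      exact h4' (congrArg Subtype.val this).symm
  -- distinctness facts
  have nxx' : x ≠ x' := fun h => hx'S (h ▸ hxS)
  have nxy' : x ≠ y' := fun h => hy'S (h ▸ hxS)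
  have nyx' : y ≠ x' := fun h => hx'S (h ▸ hyS)
  have nyy' : y ≠ y' := fun h => hy'S (h ▸ hyS)
  have nx'y' : x' ≠ y' := hab
  -- build an isomorphism with C4
  set g : V → Fin 4 := fun v => if v = x then 0 else if v = x' then 1 else if v = y then 2 else 3
    with hg
  have hg0 : g x = 0 := by simp [hg]
  have hg1 : g x' = 1 := by simp [hg, nxx'.symm]
  have hg2 : g y = 2 := by simp [hg, hxy.symm, nyx']
  have hg3 : g y' = 3 := by simp [hg, nxy'.symm, nx'y'.symm, nyy'.symm]
  have hglinv : ∀ v, (![x, x', y, y'] : Fin 4 → V) (g v) = v := by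
    intro v
    rcases huniv v with rfl | rfl | rfl | rfl
    · rw [hg0]; rfl
    · rw [hg2]; rfl
    · rw [hg1]; rfl
    · rw [hg3]; rfl
  have hgrinv : ∀ i : Fin 4, g ((![x, x', y, y'] : Fin 4 → V) i) = i := by
    intro i
    fin_cases i
    · exact hg0
    · exact hg1
    · exact hg2
    · exact hg3
  set eqv : V ≃ Fin 4 := ⟨g, ![x, x', y, y'], hglinv, hgrinv⟩ with heqv
  have hadj : ∀ a b : V, (SimpleGraph.cycleGraph 4).Adj (g a) (g b) ↔ G.Adj a b := by
    intro a b
    rcases huniv a with rfl | rfl | rfl | rfl <;> rcases huniv b with rfl | rfl | rfl | rfl <;>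
      simp only [hg0, hg1, hg2, hg3, ← hx'def, ← hy'def] <;>
      first
        | (refine iff_of_true (by decide) ?_
           first
             | exact hxnbr.1 | exact hxnbr.2 | exact hynbr.1 | exact hynbr.2
             | exact hxnbr.1.symm | exact hxnbr.2.symm | exact hynbr.1.symm
             | exact hynbr.2.symm)
        | (refine iff_of_false (by decide) ?_
           first
             | exact G.loopless.irrefl _
             | exact hnadjxy
             | exact hnadj'
             | exact fun h => hnadjxy h.symm
             | exact fun h => hnadj' h.symm)
  exact h4.false ⟨eqv, hadj _ _⟩
end FactA

section Counting

open SimpleGraph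

variable {V : Type*}

lemma compDist_sum [Fintype V] [DecidableEq V] (G : SimpleGraph V) (S B : Finset V) :
    ∑ᶠ c, compDist G S B c = (B \ S).card := by
  classical
  letI : Fintype (delComp G S) := Fintype.ofFinite _
  rw [finsum_eq_sum_of_fintype]
  have h1 : ∀ c : delComp G S, compDist G S B c =
      ((Finset.univ.filter (fun v : ((↑S : Set V)ᶜ : Set V) => (v : V) ∈ B)).filter
        (fun v => (G.induce ((↑S : Set V)ᶜ)).connectedComponentMk v = c)).card := by
    intro c
    rw [compDist, Set.ncard_eq_toFinset_card']
    congr 1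
    ext v
    simp [and_assoc]
  have h2 : (Finset.univ.filter
      (fun v : ((↑S : Set V)ᶜ : Set V) => (v : V) ∈ B)).card = (B \ S).card := by
    refine Finset.card_bij (fun v _ => (v : V)) ?_ ?_ ?_
    · intro v hv
      simp only [Finset.mem_filter, Finset.mem_univ, true_and] at hv
      exact Finset.mem_sdiff.mpr ⟨hv, mem_complS.mp v.2⟩
    · intro v₁ _ v₂ _ h
      exact Subtype.ext h
    · intro w hw
      rw [Finset.mem_sdiff] at hw
      exact ⟨⟨w, mem_complS.mpr hw.2⟩, by simp [hw.1], rfl⟩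
  rw [← h2]
  simp_rw [h1]
  exact (Finset.card_eq_sum_card_fiberwise (fun v _ => Finset.mem_univ _)).symm

lemma inter_card_one [Fintype V] [DecidableEq V] {G : SimpleGraph V} {k : ℕ} (hk : 1 ≤ k)
    {S B : Finset V} (hB : B.card = k) (hsum : ∑ᶠ c, compDist G S B c = k - 1) :
    (B ∩ S).card = 1 := by
  rw [compDist_sum] at hsum
  have h2 : (B \ S).card + (B ∩ S).card = B.card := Finset.card_sdiff_add_card_inter B S
  omega

lemma mem_pair_split [DecidableEq V] {S B : Finset V} {x y : V} (hxy : x ≠ y)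
    (hSxy : S = {x, y}) (h1 : (B ∩ S).card = 1) :
    (x ∈ B ∧ y ∉ B) ∨ (y ∈ B ∧ x ∉ B) := by
  subst hSxy
  obtain ⟨a, ha⟩ := Finset.card_eq_one.mp h1
  have hmem : ∀ v, v ∈ B ∧ (v = x ∨ v = y) ↔ v = a := by
    intro v
    constructor
    · intro hv
      have hv' : v ∈ B ∩ {x, y} := Finset.mem_inter.mpr ⟨hv.1, by simp [hv.2]⟩
      rw [ha, Finset.mem_singleton] at hv'
      exact hv'
    · rintro rfl
      have hv' := Finset.mem_singleton_self v
      rw [← ha, Finset.mem_inter, Finset.mem_insert, Finset.mem_singleton] at hv'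
      exact hv'
  have haB : a ∈ B ∧ (a = x ∨ a = y) := (hmem a).mpr rfl
  rcases haB.2 with rfl | rfl
  · left
    refine ⟨haB.1, fun hyB => hxy ?_⟩
    have := (hmem y).mp ⟨hyB, Or.inr rfl⟩
    rw [this]
  · right
    refine ⟨haB.1, fun hxB => hxy ?_⟩
    have := (hmem x).mp ⟨hxB, Or.inl rfl⟩
    rw [this]

lemma tokenMove_symmDiff [DecidableEq V] (A S : Finset V) : tokenMove A S = A ∆ S := by
  rw [symmDiff_def, Finset.sup_eq_union]
  rfl

lemma tokenMove_pair [DecidableEq V] {S B : Finset V} {x y : V} (hxy : x ≠ y)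
    (hSxy : S = {x, y}) (hxB : x ∈ B) (hyB : y ∉ B) :
    tokenMove B S = insert y (B.erase x) := by
  subst hSxy
  ext v
  by_cases h1 : v = x <;> by_cases h2 : v = y <;>
    simp [tokenMove, h1, h2, hxB, hyB, hxy]

lemma tokenMove_card_pair [DecidableEq V] {S B : Finset V} {x y : V} (hxy : x ≠ y)
    (hSxy : S = {x, y}) (hxB : x ∈ B) (hyB : y ∉ B) :
    (tokenMove B S).card = B.card := by
  rw [tokenMove_pair hxy hSxy hxB hyB]
  rw [Finset.card_insert_of_notMem (fun h => hyB (Finset.mem_of_mem_erase h)),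
    Finset.card_erase_of_mem hxB]
  have : 0 < B.card := Finset.card_pos.mpr ⟨x, hxB⟩
  omega

lemma compDist_swap [Fintype V] [DecidableEq V] (G : SimpleGraph V) (T : Finset V) {x y : V}
    (hxT : x ∈ ((↑T : Set V)ᶜ : Set V)) (hyT : y ∈ ((↑T : Set V)ᶜ : Set V))
    (hcm : (G.induce ((↑T : Set V)ᶜ)).connectedComponentMk ⟨x, hxT⟩ =
      (G.induce ((↑T : Set V)ᶜ)).connectedComponentMk ⟨y, hyT⟩)
    {B : Finset V} (hxB : x ∈ B) (hyB : y ∉ B) :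
    compDist G T (insert y (B.erase x)) = compDist G T B := by
  classical
  have hxyne : x ≠ y := fun h => hyB (h ▸ hxB)
  funext c
  by_cases hc : (G.induce ((↑T : Set V)ᶜ)).connectedComponentMk ⟨x, hxT⟩ = c
  · have hset : {v : ((↑T : Set V)ᶜ : Set V) | (v : V) ∈ insert y (B.erase x) ∧
        (G.induce ((↑T : Set V)ᶜ)).connectedComponentMk v = c} =
        insert ⟨y, hyT⟩ ({v : ((↑T : Set V)ᶜ : Set V) | (v : V) ∈ B ∧
          (G.induce ((↑T : Set V)ᶜ)).connectedComponentMk v = c} \ {⟨x, hxT⟩}) := by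
      ext ⟨v, hv⟩
      simp only [Set.mem_setOf_eq, Finset.mem_insert, Finset.mem_erase, Set.mem_insert_iff,
        Set.mem_diff, Set.mem_singleton_iff, Subtype.mk.injEq]
      constructor
      · rintro ⟨rfl | ⟨hvx, hvB⟩, hvc⟩
        · exact Or.inl rfl
        · exact Or.inr ⟨⟨hvB, hvc⟩, hvx⟩
      · rintro (rfl | ⟨⟨hvB, hvc⟩, hvx⟩)
        · exact ⟨Or.inl rfl, hcm ▸ hc⟩
        · exact ⟨Or.inr ⟨hvx, hvB⟩, hvc⟩
    rw [compDist, compDist, hset]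
    have hymem : (⟨y, hyT⟩ : ((↑T : Set V)ᶜ : Set V)) ∉
        ({v : ((↑T : Set V)ᶜ : Set V) | (v : V) ∈ B ∧
          (G.induce ((↑T : Set V)ᶜ)).connectedComponentMk v = c} \ {⟨x, hxT⟩}) := by
      rintro ⟨⟨hyB', _⟩, _⟩
      exact hyB hyB'
    have hxmem : (⟨x, hxT⟩ : ((↑T : Set V)ᶜ : Set V)) ∈
        {v : ((↑T : Set V)ᶜ : Set V) | (v : V) ∈ B ∧
          (G.induce ((↑T : Set V)ᶜ)).connectedComponentMk v = c} := ⟨hxB, hc⟩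
    rw [Set.ncard_insert_of_notMem hymem (Set.toFinite _),
      Set.ncard_diff_singleton_of_mem hxmem]
    have hpos : 0 < ({v : ((↑T : Set V)ᶜ : Set V) | (v : V) ∈ B ∧
        (G.induce ((↑T : Set V)ᶜ)).connectedComponentMk v = c}).ncard :=
      (Set.ncard_pos (Set.toFinite _)).mpr ⟨_, hxmem⟩
    omega
  · have hset : {v : ((↑T : Set V)ᶜ : Set V) | (v : V) ∈ insert y (B.erase x) ∧
        (G.induce ((↑T : Set V)ᶜ)).connectedComponentMk v = c} =
        {v : ((↑T : Set V)ᶜ : Set V) | (v : V) ∈ B ∧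
          (G.induce ((↑T : Set V)ᶜ)).connectedComponentMk v = c} := by
      ext ⟨v, hv⟩
      simp only [Set.mem_setOf_eq, Finset.mem_insert, Finset.mem_erase]
      constructor
      · rintro ⟨rfl | ⟨hvx, hvB⟩, hvc⟩
        · exact absurd (hcm ▸ hvc) hc
        · exact ⟨hvB, hvc⟩
      · rintro ⟨hvB, hvc⟩
        refine ⟨Or.inr ⟨fun h => ?_, hvB⟩, hvc⟩
        subst h
        exact hc hvc
    rw [compDist, compDist, hset]

end Counting

section Phi

open SimpleGraph

variable {V : Type*}

lemma compDist_tokenMove [Fintype V] [DecidableEq V] {G : SimpleGraph V} {S T B : Finset V}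
    {xt yt : V} (hxyt : xt ≠ yt) (hTxy : T = {xt, yt})
    (hxtS : xt ∈ ((↑S : Set V)ᶜ : Set V)) (hytS : yt ∈ ((↑S : Set V)ᶜ : Set V))
    (hcm : (G.induce ((↑S : Set V)ᶜ)).connectedComponentMk ⟨xt, hxtS⟩ =
      (G.induce ((↑S : Set V)ᶜ)).connectedComponentMk ⟨yt, hytS⟩)
    (h1 : (B ∩ T).card = 1) :
    compDist G S (tokenMove B T) = compDist G S B := by
  rcases mem_pair_split hxyt hTxy h1 with ⟨hm1, hm2⟩ | ⟨hm1, hm2⟩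
  · rw [tokenMove_pair hxyt hTxy hm1 hm2]
    exact compDist_swap G S hxtS hytS hcm hm1 hm2
  · rw [tokenMove_pair hxyt.symm (hTxy.trans (Finset.pair_comm _ _)) hm1 hm2]
    exact compDist_swap G S hytS hxtS hcm.symm hm1 hm2

lemma tokenMove_card [DecidableEq V] {T B : Finset V} {xt yt : V} (hxyt : xt ≠ yt)
    (hTxy : T = {xt, yt}) (h1 : (B ∩ T).card = 1) :
    (tokenMove B T).card = B.card := by
  rcases mem_pair_split hxyt hTxy h1 with ⟨hm1, hm2⟩ | ⟨hm1, hm2⟩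
  · exact tokenMove_card_pair hxyt hTxy hm1 hm2
  · exact tokenMove_card_pair hxyt.symm (hTxy.trans (Finset.pair_comm _ _)) hm1 hm2

lemma phi_card [Fintype V] [DecidableEq V] {G : SimpleGraph V} {k : ℕ} (hk1 : 1 ≤ k)
    {S : Finset V} (hS : SameNbrCut G S) {α : Set (delComp G S → ℕ)}
    (hα : ∀ t ∈ α, ∑ᶠ c, t c = k - 1) {B : Finset V} (hB : B.card = k) :
    (phiFun G S α B).card = k := by
  rw [phiFun]
  split_ifs with h
  · obtain ⟨xs, ys, hxys, hSab⟩ := Finset.card_eq_two.mp hS.1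
    rw [tokenMove_card hxys hSab (inter_card_one hk1 hB (hα _ h))]
    exact hB
  · exact hB

lemma phi_comm [Fintype V] [DecidableEq V] {G : SimpleGraph V} (hG : G.Connected)
    (h4 : IsEmpty (G ≃g SimpleGraph.cycleGraph 4)) {k : ℕ} (hk1 : 1 ≤ k)
    {S T : Finset V} (hS : SameNbrCut G S) (hT : SameNbrCut G T) (hne : S ≠ T)
    {α : Set (delComp G S → ℕ)} {γ : Set (delComp G T → ℕ)}
    (hα : ∀ t ∈ α, ∑ᶠ c, t c = k - 1) (hγ : ∀ t ∈ γ, ∑ᶠ c, t c = k - 1)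
    {B : Finset V} (hB : B.card = k) :
    phiFun G S α (phiFun G T γ B) = phiFun G T γ (phiFun G S α B) := by
  classical
  obtain ⟨xs, ys, hxys, hSxy⟩ := Finset.card_eq_two.mp hS.1
  obtain ⟨xt, yt, hxyt, hTxy⟩ := Finset.card_eq_two.mp hT.1
  have hdisj : Disjoint S T := sameNbrCut_disjoint hG hS hT hne
  have hxsS : xs ∈ S := by rw [hSxy]; simp
  have hysS : ys ∈ S := by rw [hSxy]; simp
  have hxtT : xt ∈ T := by rw [hTxy]; simp
  have hytT : yt ∈ T := by rw [hTxy]; simp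
  have hxsT : xs ∈ ((↑T : Set V)ᶜ : Set V) :=
    mem_complS.mpr (Finset.disjoint_left.mp hdisj hxsS)
  have hysT : ys ∈ ((↑T : Set V)ᶜ : Set V) :=
    mem_complS.mpr (Finset.disjoint_left.mp hdisj hysS)
  have hxtS : xt ∈ ((↑S : Set V)ᶜ : Set V) :=
    mem_complS.mpr (Finset.disjoint_right.mp hdisj hxtT)
  have hytS : yt ∈ ((↑S : Set V)ᶜ : Set V) :=
    mem_complS.mpr (Finset.disjoint_right.mp hdisj hytT)
  have hcmS : (G.induce ((↑T : Set V)ᶜ)).connectedComponentMk ⟨xs, hxsT⟩ =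
      (G.induce ((↑T : Set V)ᶜ)).connectedComponentMk ⟨ys, hysT⟩ :=
    sameNbrCut_pair_same_comp hG h4 hS hT hne hxys hSxy hxsT hysT
  have hcmT : (G.induce ((↑S : Set V)ᶜ)).connectedComponentMk ⟨xt, hxtS⟩ =
      (G.induce ((↑S : Set V)ᶜ)).connectedComponentMk ⟨yt, hytS⟩ :=
    sameNbrCut_pair_same_comp hG h4 hT hS (Ne.symm hne) hxyt hTxy hxtS hytS
  by_cases hTc : compDist G T B ∈ γ <;> by_cases hSc : compDist G S B ∈ α
  · -- both act
    have invS : compDist G S (tokenMove B T) = compDist G S B :=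
      compDist_tokenMove hxyt hTxy hxtS hytS hcmT (inter_card_one hk1 hB (hγ _ hTc))
    have invT : compDist G T (tokenMove B S) = compDist G T B :=
      compDist_tokenMove hxys hSxy hxsT hysT hcmS (inter_card_one hk1 hB (hα _ hSc))
    unfold phiFun
    rw [if_pos hTc, if_pos hSc, invS, invT, if_pos hSc, if_pos hTc]
    rw [tokenMove_symmDiff, tokenMove_symmDiff, tokenMove_symmDiff, tokenMove_symmDiff,
      symmDiff_assoc, symmDiff_assoc, symmDiff_comm T S]
  · -- only T acts
    have invS : compDist G S (tokenMove B T) = compDist G S B :=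
      compDist_tokenMove hxyt hTxy hxtS hytS hcmT (inter_card_one hk1 hB (hγ _ hTc))
    unfold phiFun
    rw [if_pos hTc, invS, if_neg hSc, if_neg hSc, if_pos hTc]
  · -- only S acts
    have invT : compDist G T (tokenMove B S) = compDist G T B :=
      compDist_tokenMove hxys hSxy hxsT hysT hcmS (inter_card_one hk1 hB (hα _ hSc))
    unfold phiFun
    rw [if_neg hTc, if_pos hSc, invT, if_neg hTc]
  · unfold phiFun
    rw [if_neg hTc, if_neg hSc, if_neg hTc]

lemma foldr_comp_map {ι κ : Type*} (g : ι → κ → κ) (L : List ι) (A : κ) :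
    ((L.map g).foldr (· ∘ ·) id) A = L.foldr (fun i B => g i B) A := by
  induction L generalizing A with
  | nil => rfl
  | cons i L ih => simp only [List.map_cons, List.foldr_cons, Function.comp_apply, ih]

end Phi

/-- Lemma 2(a): for `f ∈ 𝒮` we have `ι(f) ∘ ψ_β = ψ_{fβ} ∘ ι(f)`.
Here `f` permutes the cuts via `σ`, respects the labels `x i`, maps components of
`G \ Sᵢ` onto components of `G \ S_{σ i}` via `e i`, and `β'` is the family `fβ`,
characterized by `t ∈ β'_{σ i} ↔ t ∘ (e i) ∈ βᵢ`. -/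
theorem iota_psi_comm [Fintype V] [DecidableEq V] (G : SimpleGraph V)
    (hG : G.Connected) (h4 : IsEmpty (G ≃g SimpleGraph.cycleGraph 4))
    (k : ℕ) (hk1 : 1 ≤ k) (hk2 : k ≤ Fintype.card V - 1)
    (q : ℕ) (S : Fin q → Finset V) (hinj : Function.Injective S)
    (hcut : ∀ i, SameNbrCut G (S i))
    (hall : ∀ T : Finset V, SameNbrCut G T → ∃ i, T = S i)
    (x : Fin q → V) (hx : ∀ i, x i ∈ S i)
    (f : G ≃g G) (σ : Equiv.Perm (Fin q))
    (hσ : ∀ i, Finset.image f (S i) = S (σ i))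
    (hlab : ∀ i, f (x i) = x (σ i))
    (e : ∀ i, delComp G (S i) ≃ delComp G (S (σ i)))
    (he : ∀ (i : Fin q) (v : V) (hv : v ∈ ((↑(S i) : Set V))ᶜ)
        (hfv : f v ∈ ((↑(S (σ i)) : Set V))ᶜ),
        e i ((G.induce ((↑(S i) : Set V))ᶜ).connectedComponentMk ⟨v, hv⟩)
          = (G.induce ((↑(S (σ i)) : Set V))ᶜ).connectedComponentMk ⟨f v, hfv⟩)
    (β β' : ∀ i, Set (delComp G (S i) → ℕ)) (hβ : ∀ i, β i ⊆ TS G (S i) k)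
    (hβ' : ∀ (i : Fin q) (t : delComp G (S (σ i)) → ℕ),
        t ∈ β' (σ i) ↔ (t ∘ e i) ∈ β i) :
    ∀ A : Finset V, A.card = k →
      Finset.image f (psiFun G S β A) = psiFun G S β' (Finset.image f A) := by
  classical
  have hfinj : Function.Injective (f : V → V) := f.toEquiv.injective
  have hsumβ : ∀ i, ∀ t ∈ β i, ∑ᶠ c, t c = k - 1 := fun i t ht => (hβ i ht).2
  have hsumβ' : ∀ j, ∀ t ∈ β' j, ∑ᶠ c, t c = k - 1 := by
    intro j
    obtain ⟨i, rfl⟩ : ∃ i, j = σ i := ⟨σ.symm j, (σ.apply_symm_apply j).symm⟩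
    intro t ht
    have h1 := hsumβ i _ ((hβ' i t).mp ht)
    letI : Fintype (delComp G (S i)) := Fintype.ofFinite _
    letI : Fintype (delComp G (S (σ i))) := Fintype.ofFinite _
    rw [finsum_eq_sum_of_fintype] at h1 ⊢
    simp only [Function.comp_apply] at h1
    rw [← Equiv.sum_comp (e i) t]
    exact h1
  have hstep : ∀ (i : Fin q) (A : Finset V),
      Finset.image f (phiFun G (S i) (β i) A) =
        phiFun G (S (σ i)) (β' (σ i)) (Finset.image f A) := by
    intro i A
    have hmem : ∀ v : V, f v ∈ S (σ i) ↔ v ∈ S i := by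
      intro v
      rw [← hσ i]
      constructor
      · intro hv
        obtain ⟨u, hu, huv⟩ := Finset.mem_image.mp hv
        rwa [← hfinj huv]
      · exact fun hv => Finset.mem_image_of_mem _ hv
    have hFc : ∀ v : ((↑(S i) : Set V)ᶜ : Set V),
        f (v : V) ∈ ((↑(S (σ i)) : Set V)ᶜ : Set V) :=
      fun v => mem_complS.mpr (fun h => mem_complS.mp v.2 ((hmem v).mp h))
    have hFinj : Function.Injective
        (fun v : ((↑(S i) : Set V)ᶜ : Set V) =>
          (⟨f (v : V), hFc v⟩ : ((↑(S (σ i)) : Set V)ᶜ : Set V))) := by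
      intro a b hab
      exact Subtype.ext (hfinj (congrArg Subtype.val hab))
    have hcd : ∀ c, compDist G (S (σ i)) (Finset.image f A) (e i c) =
        compDist G (S i) A c := by
      intro c
      have himg : {w : ((↑(S (σ i)) : Set V)ᶜ : Set V) | (w : V) ∈ Finset.image f A ∧
          (G.induce ((↑(S (σ i)) : Set V)ᶜ)).connectedComponentMk w = e i c} =
          (fun v : ((↑(S i) : Set V)ᶜ : Set V) =>
            (⟨f (v : V), hFc v⟩ : ((↑(S (σ i)) : Set V)ᶜ : Set V))) ''
          {v : ((↑(S i) : Set V)ᶜ : Set V) | (v : V) ∈ A ∧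
            (G.induce ((↑(S i) : Set V)ᶜ)).connectedComponentMk v = c} := by
        ext w
        constructor
        · rintro ⟨hwA, hwc⟩
          obtain ⟨v, hvA, hfv⟩ := Finset.mem_image.mp hwA
          have hvSc : v ∈ ((↑(S i) : Set V)ᶜ : Set V) :=
            mem_complS.mpr (fun h => mem_complS.mp w.2 (hfv ▸ (hmem v).mpr h))
          have hw' : (⟨f v, hFc ⟨v, hvSc⟩⟩ : ((↑(S (σ i)) : Set V)ᶜ : Set V)) = w :=
            Subtype.ext hfv
          refine ⟨⟨v, hvSc⟩, ⟨hvA, (e i).injective ?_⟩, hw'⟩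
          exact (he i v hvSc (hFc ⟨v, hvSc⟩)).trans
            ((congrArg _ hw').trans hwc)
        · rintro ⟨v, ⟨hvA, hvc⟩, rfl⟩
          refine ⟨Finset.mem_image_of_mem _ hvA, ?_⟩
          exact (he i v.1 v.2 (hFc v)).symm.trans (congrArg (e i) hvc)
      rw [compDist, compDist, himg, Set.ncard_image_of_injective _ hFinj]
    have hfun : compDist G (S (σ i)) (Finset.image f A) ∘ e i = compDist G (S i) A :=
      funext hcd
    have hcond : (compDist G (S (σ i)) (Finset.image f A) ∈ β' (σ i)) ↔
        compDist G (S i) A ∈ β i := by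
      rw [hβ' i, hfun]
    have hmove : Finset.image f (tokenMove A (S i)) =
        tokenMove (Finset.image f A) (S (σ i)) := by
      rw [tokenMove, tokenMove, Finset.image_union, Finset.image_sdiff _ _ hfinj,
        Finset.image_sdiff _ _ hfinj, hσ i]
    by_cases h : compDist G (S i) A ∈ β i
    · simp only [phiFun]
      rw [if_pos h, if_pos (hcond.mpr h), hmove]
    · simp only [phiFun]
      rw [if_neg h, if_neg (fun hc => h (hcond.mp hc))]
  have hpsi : ∀ (γ : ∀ i, Set (delComp G (S i) → ℕ)) (A : Finset V),
      psiFun G S γ A = (List.finRange q).foldr (fun i B => phiFun G (S i) (γ i) B) A := by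
    intro γ A
    rw [psiFun, List.ofFn_eq_map]
    exact foldr_comp_map _ _ _
  have hcard : ∀ (L : List (Fin q)) (A : Finset V), A.card = k →
      ((L.foldr (fun i B => phiFun G (S i) (β' i) B) A)).card = k := by
    intro L
    induction L with
    | nil => exact fun A hA => hA
    | cons i L ih =>
      intro A hA
      exact phi_card hk1 (hcut i) (hsumβ' i) (ih A hA)
  have hperm : ∀ {L L' : List (Fin q)}, L.Perm L' → ∀ A : Finset V, A.card = k →
      L.foldr (fun i B => phiFun G (S i) (β' i) B) A =
        L'.foldr (fun i B => phiFun G (S i) (β' i) B) A := by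
    intro L L' hp
    induction hp with
    | nil => exact fun A _ => rfl
    | cons x _ ih =>
      intro A hA
      simp only [List.foldr_cons]
      rw [ih A hA]
    | swap x y l =>
      intro A hA
      by_cases hxy : x = y
      · subst hxy; rfl
      · simp only [List.foldr_cons]
        exact phi_comm hG h4 hk1 (hcut y) (hcut x)
          (fun hSS => hxy (hinj hSS).symm) (hsumβ' y) (hsumβ' x) (hcard l A hA)
    | trans _ _ ih1 ih2 =>
      intro A hA
      rw [ih1 A hA, ih2 A hA]
  have hmain : ∀ (L : List (Fin q)) (A : Finset V),
      Finset.image f (L.foldr (fun i B => phiFun G (S i) (β i) B) A) =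
        (L.map σ).foldr (fun i B => phiFun G (S i) (β' i) B) (Finset.image f A) := by
    intro L
    induction L with
    | nil => exact fun A => rfl
    | cons i L ih =>
      intro A
      simp only [List.foldr_cons, List.map_cons]
      rw [hstep i, ih A]
  have hp : ((List.finRange q).map σ).Perm (List.finRange q) := by
    apply List.perm_of_nodup_nodup_toFinset_eq
    · exact (List.nodup_finRange q).map σ.injective
    · exact List.nodup_finRange q
    · ext j
      simp only [List.mem_toFinset, List.mem_map, List.mem_finRange, true_and, iff_true]
      exact ⟨σ.symm j, σ.apply_symm_apply j⟩
  intro A hA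
  rw [hpsi β A, hpsi β' (Finset.image f A), hmain]
  exact hperm hp (Finset.image f A)
    (by rw [Finset.card_image_of_injective A hfinj]; exact hA)
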